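/- arXiv:1211.3000 — 3 statements merged into one kernel-verified Lean document; each statement's English description precedes it below -/
import Mathlib

section
/- Let l ≥ 1 and for each i with 1 ≤ i ≤ l let m_i ≥ 2 and x_{i,1} ≤ x_{i,2} ≤ … ≤ x_{i,m_i} be positive integers. Define y_i = x_{i,1} + … + x_{i,m_i - 1} for 1 ≤ i ≤ l and y_{l+1} = x_{l,m_l} = 1. Assume that for every i and j we have x_{i,j} ≤ y_{i+1} + … + y_l + y_{l+1}. Let N = y_1 + … + y_l + y_{l+1}. Then for every nonnegative integer z with z ≤ N, there exists a subset Z of the multiset of all the x_{i,j} with 1 ≤ i ≤ l, 1 ≤ j ≤ m_i − 1 (together possibly with x_{l,m_l}) whose elements sum to exactly z. -/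
/-- Greedy subset-sum lemma: if every element of `S` is at most one more than the
sum of the elements of `S` ranked strictly below it (by `r`), then every `z` up to
the total sum is a subset sum. -/
lemma greedy_subset_sum {ι : Type*} [DecidableEq ι] (f : ι → ℕ) (r : ι → ℕ) :
    ∀ S : Finset ι,
      (∀ p ∈ S, f p ≤ 1 + ∑ q ∈ S.filter (fun q => r q < r p), f q) →
      ∀ z ≤ ∑ p ∈ S, f p, ∃ T ⊆ S, ∑ p ∈ T, f p = z := by
  intro S
  induction S using Finset.strongInduction with
  | _ S IH =>
    intro hcond z hz
    rcases S.eq_empty_or_nonempty with rfl | hne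
    · simp only [Finset.sum_empty, Nat.le_zero] at hz
      exact ⟨∅, Finset.Subset.refl _, by simp [hz]⟩
    · obtain ⟨p, hpS, hpmax⟩ := S.exists_max_image r hne
      set S' := S.erase p with hS'
      have hsub : S' ⊂ S := Finset.erase_ssubset hpS
      have hfilter : ∀ q ∈ S', S'.filter (fun q' => r q' < r q) =
          S.filter (fun q' => r q' < r q) := by
        intro q hq
        ext q'
        simp only [Finset.mem_filter, hS', Finset.mem_erase]
        constructor
        · rintro ⟨⟨-, h1⟩, h2⟩; exact ⟨h1, h2⟩
        · rintro ⟨h1, h2⟩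
          refine ⟨⟨?_, h1⟩, h2⟩
          rintro rfl
          exact absurd (hpmax q (Finset.mem_of_mem_erase hq)) (not_le_of_gt h2)
      have hcond' : ∀ q ∈ S', f q ≤ 1 + ∑ q' ∈ S'.filter (fun q' => r q' < r q), f q' := by
        intro q hq
        rw [hfilter q hq]
        exact hcond q (Finset.mem_of_mem_erase hq)
      have hsum : f p + ∑ q ∈ S', f q = ∑ q ∈ S, f q := Finset.add_sum_erase S f hpS
      by_cases hcase : z ≤ ∑ q ∈ S', f q
      · obtain ⟨T, hT, hTs⟩ := IH S' hsub hcond' z hcase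
        exact ⟨T, hT.trans (Finset.erase_subset _ _), hTs⟩
      · push_neg at hcase
        have hfp : f p ≤ 1 + ∑ q ∈ S', f q := by
          refine (hcond p hpS).trans (Nat.add_le_add_left ?_ 1)
          apply Finset.sum_le_sum_of_subset
          intro q hq
          simp only [Finset.mem_filter] at hq
          refine Finset.mem_erase.mpr ⟨?_, hq.1⟩
          rintro rfl; exact lt_irrefl _ hq.2
        have hfpz : f p ≤ z := by omega
        have hz' : z - f p ≤ ∑ q ∈ S', f q := by omega
        obtain ⟨T, hT, hTs⟩ := IH S' hsub hcond' (z - f p) hz'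
        have hpT : p ∉ T := fun h => (Finset.mem_erase.mp (hT h)).1 rfl
        refine ⟨insert p T, ?_, ?_⟩
        · intro q hq
          rcases Finset.mem_insert.mp hq with rfl | hq
          · exact hpS
          · exact Finset.mem_of_mem_erase (hT hq)
        · rw [Finset.sum_insert hpT, hTs]
          omega

/-- Subset-sum lemma (Lemma in the paper): given blocks of positive integers
`x i 1 ≤ … ≤ x i (m i)` for `1 ≤ i ≤ l`, with `y i = x i 1 + … + x i (m i - 1)`,
`x l (m l) = 1`, and each `x i j` bounded by `y (i+1) + … + y l + 1`,
every `z ≤ N = y 1 + … + y l + 1` is the sum of a subset of the multiset of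
the `x i j` with `1 ≤ j ≤ m i - 1` together possibly with `x l (m l)`. -/
theorem subset_sum_lemma
    (l : ℕ) (hl : 1 ≤ l)
    (m : ℕ → ℕ) (hm : ∀ i ∈ Finset.Icc 1 l, 2 ≤ m i)
    (x : ℕ → ℕ → ℕ)
    (hpos : ∀ i ∈ Finset.Icc 1 l, ∀ j ∈ Finset.Icc 1 (m i), 0 < x i j)
    (hmono : ∀ i ∈ Finset.Icc 1 l, ∀ j j', 1 ≤ j → j ≤ j' → j' ≤ m i → x i j ≤ x i j')
    (y : ℕ → ℕ)
    (hy : ∀ i ∈ Finset.Icc 1 l, y i = ∑ j ∈ Finset.Icc 1 (m i - 1), x i j)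
    (hlast : x l (m l) = 1)
    (hbound : ∀ i ∈ Finset.Icc 1 l, ∀ j ∈ Finset.Icc 1 (m i),
      x i j ≤ (∑ k ∈ Finset.Icc (i + 1) l, y k) + 1)
    (N : ℕ) (hN : N = (∑ i ∈ Finset.Icc 1 l, y i) + 1)
    (z : ℕ) (hz : z ≤ N) :
    ∃ Z : Finset (ℕ × ℕ),
      (∀ p ∈ Z, (1 ≤ p.1 ∧ p.1 ≤ l ∧ 1 ≤ p.2 ∧ p.2 ≤ m p.1 - 1) ∨ p = (l, m l)) ∧
      ∑ p ∈ Z, x p.1 p.2 = z := by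
  classical
  -- the multiset of pairs
  set S₀ : Finset (ℕ × ℕ) :=
    (Finset.Icc 1 l).biUnion (fun i => (Finset.Icc 1 (m i - 1)).image (fun j => (i, j)))
    with hS₀def
  have hmemS₀ : ∀ p : ℕ × ℕ, p ∈ S₀ ↔ (1 ≤ p.1 ∧ p.1 ≤ l ∧ 1 ≤ p.2 ∧ p.2 ≤ m p.1 - 1) := by
    intro p
    simp only [hS₀def, Finset.mem_biUnion, Finset.mem_image, Finset.mem_Icc]
    constructor
    · rintro ⟨i, ⟨hi1, hi2⟩, j, ⟨hj1, hj2⟩, rfl⟩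
      exact ⟨hi1, hi2, hj1, hj2⟩
    · rintro ⟨h1, h2, h3, h4⟩
      exact ⟨p.1, ⟨h1, h2⟩, p.2, ⟨h3, h4⟩, rfl⟩
  have hnotin : (l, m l) ∉ S₀ := by
    intro h
    have := (hmemS₀ _).mp h
    have h2 := hm l (by simp [hl])
    simp only at this
    omega
  set S : Finset (ℕ × ℕ) := insert (l, m l) S₀ with hSdef
  have hsumS₀ : ∀ I : Finset ℕ, (∀ i ∈ I, i ∈ Finset.Icc 1 l) →
      ∑ p ∈ I.biUnion (fun i => (Finset.Icc 1 (m i - 1)).image (fun j => (i, j))),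
        x p.1 p.2 = ∑ i ∈ I, y i := by
    intro I hI
    rw [Finset.sum_biUnion]
    · refine Finset.sum_congr rfl fun i hi => ?_
      rw [Finset.sum_image (by intro a _ b _ h; simpa using h), hy i (hI i hi)]
    · intro a _ b _ hab
      simp only [Finset.disjoint_left, Finset.mem_image]
      rintro p ⟨j, -, rfl⟩ ⟨j', -, h⟩
      exact hab (congrArg Prod.fst h).symm
  have hsum : ∑ p ∈ S, x p.1 p.2 = N := by
    rw [hSdef, Finset.sum_insert hnotin, hlast, hN,
      hsumS₀ (Finset.Icc 1 l) (fun i hi => hi)]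
    omega
  -- the greedy condition with rank r p = l - p.1
  have hcond : ∀ p ∈ S, x p.1 p.2 ≤
      1 + ∑ q ∈ S.filter (fun q => l - q.1 < l - p.1), x q.1 q.2 := by
    intro p hp
    rcases Finset.mem_insert.mp hp with rfl | hp
    · simp [hlast]
    · obtain ⟨h1, h2, h3, h4⟩ := (hmemS₀ p).mp hp
      have hmp : 2 ≤ m p.1 := hm p.1 (Finset.mem_Icc.mpr ⟨h1, h2⟩)
      have hb := hbound p.1 (Finset.mem_Icc.mpr ⟨h1, h2⟩) p.2
        (Finset.mem_Icc.mpr ⟨h3, by omega⟩)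
      refine hb.trans ?_
      rw [Nat.add_comm]
      refine Nat.add_le_add_left ?_ 1
      have key : ∑ k ∈ Finset.Icc (p.1 + 1) l, y k =
          ∑ q ∈ (Finset.Icc (p.1 + 1) l).biUnion
            (fun i => (Finset.Icc 1 (m i - 1)).image (fun j => (i, j))), x q.1 q.2 := by
        rw [hsumS₀ _ (fun i hi => by simp only [Finset.mem_Icc] at hi ⊢; omega)]
      rw [key]
      apply Finset.sum_le_sum_of_subset
      intro q hq
      simp only [Finset.mem_biUnion, Finset.mem_image, Finset.mem_Icc] at hq
      obtain ⟨i, ⟨hi1, hi2⟩, j, ⟨hj1, hj2⟩, rfl⟩ := hq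
      refine Finset.mem_filter.mpr ⟨?_, ?_⟩
      · exact Finset.mem_insert_of_mem ((hmemS₀ (i, j)).mpr ⟨by omega, hi2, hj1, hj2⟩)
      · show l - i < l - p.1
        omega
  obtain ⟨T, hT, hTs⟩ := greedy_subset_sum (fun p => x p.1 p.2) (fun p => l - p.1) S hcond z
    (by rw [hsum]; exact hz)
  refine ⟨T, fun p hp => ?_, hTs⟩
  rcases Finset.mem_insert.mp (hT hp) with h | h
  · exact Or.inr h
  · exact Or.inl ((hmemS₀ p).mp h)
end

section
/- In the greedy procedure from the subset-sum lemma (processing the x_{i,j} in the order x_{1,1},…,x_{1,m_1-1},x_{2,1},…,x_{l,m_l-1}, adding an element to Z whenever the running sum plus the element does not exceed z), after processing all elements of block i the running sum lies in the interval [z − (y_{i+1}+…+y_{l+1}), z]. -/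
/-- The running sum of the greedy procedure with cap `z`, processing a list of
elements in order, adding each element iff the sum stays `≤ z`. -/
def greedySum (z : ℕ) (L : List ℕ) : ℕ :=
  L.foldl (fun s a => if s + a ≤ z then s + a else s) 0

/-- The list of elements of blocks `1, …, i` in order:
`x 1 1, …, x 1 (m 1 - 1), x 2 1, …, x i (m i - 1)`. -/
def blockPrefix (m : ℕ → ℕ) (x : ℕ → ℕ → ℕ) (i : ℕ) : List ℕ :=
  ((List.range i).map (fun k => (List.range (m (k + 1) - 1)).map
    (fun j => x (k + 1) (j + 1)))).flatten

lemma greedy_foldl_le {z : ℕ} : ∀ (L : List ℕ) {s : ℕ}, s ≤ z →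
    L.foldl (fun s a => if s + a ≤ z then s + a else s) s ≤ z
  | [], _, hs => hs
  | a :: L, s, hs => by
      simp only [List.foldl_cons]
      exact greedy_foldl_le L (by split <;> omega)

lemma greedy_le_foldl {z : ℕ} : ∀ (L : List ℕ) (s : ℕ),
    s ≤ L.foldl (fun s a => if s + a ≤ z then s + a else s) s
  | [], _ => le_rfl
  | a :: L, s => by
      simp only [List.foldl_cons]
      refine le_trans ?_ (greedy_le_foldl L _)
      split <;> omega

lemma greedy_block_step {z C : ℕ} : ∀ (L : List ℕ), (∀ b ∈ L, b ≤ C + 1) → ∀ s : ℕ,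
    L.foldl (fun s a => if s + a ≤ z then s + a else s) s = s + L.sum ∨
    z ≤ L.foldl (fun s a => if s + a ≤ z then s + a else s) s + C
  | [], _, s => Or.inl (by simp)
  | a :: L, hb, s => by
      simp only [List.foldl_cons, List.sum_cons]
      by_cases h : s + a ≤ z
      · rw [if_pos h]
        rcases greedy_block_step (z := z) L (fun b hb' => hb b (List.mem_cons_of_mem _ hb')) (s + a)
          with h1 | h1
        · left; omega
        · right; exact h1
      · rw [if_neg h]
        right
        have hA : a ≤ C + 1 := hb a List.mem_cons_self
        have := greedy_le_foldl (z := z) L s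
        omega

lemma list_range_map_sum (f : ℕ → ℕ) (n : ℕ) :
    ((List.range n).map f).sum = ∑ k ∈ Finset.range n, f k := by
  induction n with
  | zero => simp
  | succ n ih =>
      rw [List.range_succ, List.map_append, List.sum_append, Finset.sum_range_succ, ih]
      simp

/-- Greedy invariant: in the setting of the subset-sum lemma, after processing the
elements of blocks `1, …, i` the greedy running sum lies in
`[z − (y (i+1) + … + y l + 1), z]`. -/
theorem greedy_invariant
    (l : ℕ) (hl : 1 ≤ l)
    (m : ℕ → ℕ) (hm : ∀ i ∈ Finset.Icc 1 l, 2 ≤ m i)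
    (x : ℕ → ℕ → ℕ)
    (hpos : ∀ i ∈ Finset.Icc 1 l, ∀ j ∈ Finset.Icc 1 (m i), 0 < x i j)
    (hmono : ∀ i ∈ Finset.Icc 1 l, ∀ j j', 1 ≤ j → j ≤ j' → j' ≤ m i → x i j ≤ x i j')
    (y : ℕ → ℕ)
    (hy : ∀ i ∈ Finset.Icc 1 l, y i = ∑ j ∈ Finset.Icc 1 (m i - 1), x i j)
    (hlast : x l (m l) = 1)
    (hbound : ∀ i ∈ Finset.Icc 1 l, ∀ j ∈ Finset.Icc 1 (m i),
      x i j ≤ (∑ k ∈ Finset.Icc (i + 1) l, y k) + 1)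
    (N : ℕ) (hN : N = (∑ i ∈ Finset.Icc 1 l, y i) + 1)
    (z : ℕ) (hz : z ≤ N) :
    ∀ i ∈ Finset.Icc 1 l,
      z - ((∑ k ∈ Finset.Icc (i + 1) l, y k) + 1) ≤ greedySum z (blockPrefix m x i) ∧
      greedySum z (blockPrefix m x i) ≤ z := by
  have key : ∀ i, i ≤ l →
      z ≤ greedySum z (blockPrefix m x i) + ((∑ k ∈ Finset.Icc (i + 1) l, y k) + 1) ∧
      greedySum z (blockPrefix m x i) ≤ z := by
    intro i
    induction i with
    | zero =>
        intro _
        have h0 : greedySum z (blockPrefix m x 0) = 0 := by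
          simp [greedySum, blockPrefix]
        rw [h0]
        simp only [Nat.zero_add]
        exact ⟨by omega, Nat.zero_le z⟩
    | succ i ih =>
        intro hil
        obtain ⟨h1, h2⟩ := ih (Nat.le_of_succ_le hil)
        have hmem : i + 1 ∈ Finset.Icc 1 l := Finset.mem_Icc.mpr ⟨Nat.succ_le_succ (Nat.zero_le i), hil⟩
        set B : List ℕ := (List.range (m (i + 1) - 1)).map (fun j => x (i + 1) (j + 1)) with hB
        have hsplit : blockPrefix m x (i + 1) = blockPrefix m x i ++ B := by
          simp [blockPrefix, List.range_succ, hB]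
        have hgs : greedySum z (blockPrefix m x (i + 1)) =
            B.foldl (fun s a => if s + a ≤ z then s + a else s)
              (greedySum z (blockPrefix m x i)) := by
          rw [hsplit]; simp [greedySum, List.foldl_append]
        set C := ∑ k ∈ Finset.Icc (i + 2) l, y k with hC
        have hsum : ∑ k ∈ Finset.Icc (i + 1) l, y k = y (i + 1) + C := by
          rw [hC, ← Finset.Ico_add_one_right_eq_Icc, ← Finset.Ico_add_one_right_eq_Icc,
            Finset.sum_eq_sum_Ico_succ_bot (by omega : i + 1 < l + 1)]
        have hBsum : B.sum = y (i + 1) := by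
          rw [hB, hy (i + 1) hmem]
          rw [list_range_map_sum, ← Finset.Ico_add_one_right_eq_Icc, Finset.sum_Ico_eq_sum_range]
          refine Finset.sum_congr (by congr 1) (fun k _ => by rw [add_comm k 1])
        have hBmem : ∀ b ∈ B, b ≤ C + 1 := by
          intro b hb
          rw [hB] at hb
          simp only [List.mem_map, List.mem_range] at hb
          obtain ⟨j, hj, rfl⟩ := hb
          have h2m := hm (i + 1) hmem
          exact hbound (i + 1) hmem (j + 1) (Finset.mem_Icc.mpr ⟨by omega, by omega⟩)
        have hub : greedySum z (blockPrefix m x (i + 1)) ≤ z := by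
          rw [hgs]; exact greedy_foldl_le B h2
        refine ⟨?_, hub⟩
        rcases greedy_block_step (z := z) B hBmem (greedySum z (blockPrefix m x i)) with hc | hc
        · rw [hgs, hc, hBsum]
          omega
        · rw [← hgs] at hc
          omega
  intro i hi
  rw [Finset.mem_Icc] at hi
  obtain ⟨h1, h2⟩ := key i hi.2
  exact ⟨by omega, h2⟩
end

section
/- Let d ≥ 1, n ≥ 1 and let G_d(n) be the d-dimensional grid graph on vertex set {0,…,n−1}^d, where two vertices are adjacent iff they differ in exactly one coordinate and there by exactly 1. Let 1/2 ≤ α < 1. If C is a set of vertices such that every connected component of G_d(n) with C removed has at most α·n^d vertices, then |C| ≥ (1−α)·n^{d−1}/d. -/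
/-- The grid graph on the box `∏ i, {0, …, r i − 1}`: two vertices are adjacent
iff they differ in exactly one coordinate and there by exactly 1. -/
def boxGraph {d : ℕ} (r : Fin d → ℕ) : SimpleGraph ((i : Fin d) → Fin (r i)) where
  Adj v w := ∃ k, (∀ j, j ≠ k → v j = w j) ∧
    ((v k : ℕ) + 1 = (w k : ℕ) ∨ (w k : ℕ) + 1 = (v k : ℕ))
  symm := by
    refine ⟨?_⟩
    rintro v w ⟨k, h1, h2⟩
    exact ⟨k, fun j hj => (h1 j hj).symm, h2.symm⟩
  loopless := by
    refine ⟨?_⟩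
    rintro v ⟨k, _, h2⟩
    omega

/-- The `d`-dimensional grid graph `G_d(n)` on `{0, …, n−1}^d`. -/
def gridGraph (d n : ℕ) : SimpleGraph ((_ : Fin d) → Fin n) :=
  boxGraph (fun _ => n)

/-- The graph `G` with the vertices of `C` avoided: edges of `G` with both
endpoints outside `C`. Its reachability classes on `Cᶜ` are the connected
components of `G` with `C` removed. -/
def avoidGraph {V : Type*} (G : SimpleGraph V) (C : Set V) : SimpleGraph V where
  Adj a b := G.Adj a b ∧ a ∉ C ∧ b ∉ C
  symm := ⟨fun _ _ ⟨h, ha, hb⟩ => ⟨h.symm, hb, ha⟩⟩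
  loopless := ⟨fun _ ⟨h, _, _⟩ => G.irrefl h⟩

open Finset
namespace GridSepAux



/-- Vertices lying on a line (in direction `i`) that meets both `S` and its complement. -/
def badV {n d : ℕ} (i : Fin d) (S : Finset (Fin d → Fin n)) : Finset (Fin d → Fin n) :=
  univ.filter fun v => (∃ a, Function.update v i a ∈ S) ∧ (∃ a, Function.update v i a ∉ S)

lemma update_zero_eq {n d : ℕ} (v : Fin (d+1) → Fin n) (a : Fin n) :
    Function.update v 0 a = Fin.cons a (Fin.tail v) := by
  funext j
  refine Fin.cases ?_ (fun k => ?_) j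
  · simp
  · rw [Function.update_of_ne (Fin.succ_ne_zero k), Fin.cons_succ, Fin.tail]

lemma update_succ_eq {n d : ℕ} (v : Fin (d+1) → Fin n) (j : Fin d) (a : Fin n) :
    Function.update v j.succ a = Fin.cons (v 0) (Function.update (Fin.tail v) j a) := by
  funext k
  refine Fin.cases ?_ (fun m => ?_) k
  · rw [Function.update_of_ne (Fin.succ_ne_zero j).symm, Fin.cons_zero]
  · rw [Fin.cons_succ]
    by_cases hm : m = j
    · subst hm; rw [Function.update_self, Function.update_self]
    · rw [Function.update_of_ne (fun h => hm (Fin.succ_injective _ h)),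
        Function.update_of_ne hm, Fin.tail]

lemma cnt2 {n d : ℕ} (Q : (Fin (d+1) → Fin n) → Prop) [DecidablePred Q] :
    (univ.filter Q).card
      = ∑ t : Fin n, (univ.filter fun g : Fin d → Fin n => Q (Fin.cons t g)).card := by
  rw [Finset.card_eq_sum_card_fiberwise (f := fun v => v 0) (t := (univ : Finset (Fin n)))
    (fun x _ => mem_univ _)]
  refine Finset.sum_congr rfl fun t _ => Finset.card_bij' (fun v _ => Fin.tail v)
    (fun g _ => Fin.cons t g) ?_ ?_ ?_ ?_
  · intro v hv
    simp only [mem_filter, mem_univ, true_and] at hv ⊢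
    obtain ⟨hQ, h0⟩ := hv
    subst h0
    rwa [Fin.cons_self_tail]
  · intro g hg
    simp only [mem_filter, mem_univ, true_and] at hg ⊢
    exact ⟨hg, by simp⟩
  · intro v hv
    simp only [mem_filter, mem_univ, true_and] at hv
    obtain ⟨-, h0⟩ := hv
    subst h0
    exact Fin.cons_self_tail v
  · intro g hg
    exact Fin.tail_cons _ _

lemma cnt1 {n d : ℕ} (P : (Fin d → Fin n) → Prop) [DecidablePred P] :
    (univ.filter fun v : Fin (d+1) → Fin n => P (Fin.tail v)).card
      = n * (univ.filter P).card := by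
  rw [cnt2 (fun v : Fin (d+1) → Fin n => P (Fin.tail v))]
  simp [Fin.tail_cons]

def Sl {n d : ℕ} (S : Finset (Fin (d+1) → Fin n)) (t : Fin n) : Finset (Fin d → Fin n) :=
  univ.filter fun g => Fin.cons t g ∈ S

def bSl {n d : ℕ} (S : Finset (Fin (d+1) → Fin n)) (t : Fin n) : Finset (Fin d → Fin n) :=
  univ.filter fun g => Fin.cons t g ∉ S

def Mx {n d : ℕ} (S : Finset (Fin (d+1) → Fin n)) : Finset (Fin d → Fin n) :=
  univ.filter fun g => (∃ t, Fin.cons t g ∈ S) ∧ (∃ t, Fin.cons t g ∉ S)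

def Fl {n d : ℕ} (S : Finset (Fin (d+1) → Fin n)) : Finset (Fin d → Fin n) :=
  univ.filter fun g => ∀ t, Fin.cons t g ∈ S

def Em {n d : ℕ} (S : Finset (Fin (d+1) → Fin n)) : Finset (Fin d → Fin n) :=
  univ.filter fun g => ∀ t, Fin.cons t g ∉ S

@[simp] lemma mem_Sl {n d : ℕ} {S : Finset (Fin (d+1) → Fin n)} {t g} :
    g ∈ Sl S t ↔ Fin.cons t g ∈ S := by simp [Sl]
@[simp] lemma mem_bSl {n d : ℕ} {S : Finset (Fin (d+1) → Fin n)} {t g} :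
    g ∈ bSl S t ↔ Fin.cons t g ∉ S := by simp [bSl]
@[simp] lemma mem_Mx {n d : ℕ} {S : Finset (Fin (d+1) → Fin n)} {g} :
    g ∈ Mx S ↔ (∃ t, Fin.cons t g ∈ S) ∧ (∃ t, Fin.cons t g ∉ S) := by simp [Mx]
@[simp] lemma mem_Fl {n d : ℕ} {S : Finset (Fin (d+1) → Fin n)} {g} :
    g ∈ Fl S ↔ ∀ t, Fin.cons t g ∈ S := by simp [Fl]
@[simp] lemma mem_Em {n d : ℕ} {S : Finset (Fin (d+1) → Fin n)} {g} :
    g ∈ Em S ↔ ∀ t, Fin.cons t g ∉ S := by simp [Em]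




lemma two_mul_le_of_sq (x y : ℤ) (hx : 0 ≤ x) (hy : 0 ≤ y) (h : 4 * (x * x) ≤ y ^ 2) :
    2 * x ≤ y := by nlinarith

lemma slice_core {ι : Type*} [Fintype ι] [DecidableEq ι] (a b : ι → ℤ) (F E M : ℤ)
    (h1 : ∀ t, F ≤ a t) (h2 : ∀ t, E ≤ b t) (h3 : ∀ t, a t ≤ F + M) (h4 : ∀ t, b t ≤ E + M)
    (hab : ∑ t, a t ≤ ∑ t, b t) :
    2 * ∑ t, a t ≤ (Fintype.card ι : ℤ) * M + 2 * ∑ t, min (a t) (b t) := by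
  rcases isEmpty_or_nonempty ι with hι | hι
  · simp
  have hM : 0 ≤ M := by
    have g1 := h1 (Classical.arbitrary ι); have g3 := h3 (Classical.arbitrary ι); linarith
  have hc0 : (0:ℤ) ≤ (Fintype.card ι : ℤ) := by positivity
  have hcM0 : (0:ℤ) ≤ (Fintype.card ι : ℤ) * M := mul_nonneg hc0 hM
  set P := univ.filter (fun t => b t < a t) with hP
  set L := univ.filter (fun t => a t < b t) with hL
  set X : ℤ := F + M - E with hX
  set Y : ℤ := E + M - F with hY
  have hsplit : ∑ t, a t - ∑ t, min (a t) (b t) = ∑ t ∈ P, (a t - b t) := by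
    rw [← Finset.sum_sub_distrib,
      ← Finset.sum_filter_add_sum_filter_not univ (fun t => b t < a t)
        (fun t => a t - min (a t) (b t))]
    have e2 : ∑ t ∈ univ.filter (fun t => ¬ b t < a t), (a t - min (a t) (b t)) = 0 :=
      Finset.sum_eq_zero fun t ht => by
        rw [min_eq_left (not_lt.mp (mem_filter.mp ht).2)]; ring
    rw [e2, add_zero]
    exact Finset.sum_congr rfl fun t ht => by
      rw [min_eq_right (le_of_lt (mem_filter.mp ht).2)]
  have hsplit' : ∑ t, b t - ∑ t, min (a t) (b t) = ∑ t ∈ L, (b t - a t) := by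
    rw [← Finset.sum_sub_distrib,
      ← Finset.sum_filter_add_sum_filter_not univ (fun t => a t < b t)
        (fun t => b t - min (a t) (b t))]
    have e2 : ∑ t ∈ univ.filter (fun t => ¬ a t < b t), (b t - min (a t) (b t)) = 0 :=
      Finset.sum_eq_zero fun t ht => by
        rw [min_eq_right (not_lt.mp (mem_filter.mp ht).2)]; ring
    rw [e2, add_zero]
    exact Finset.sum_congr rfl fun t ht => by
      rw [min_eq_left (le_of_lt (mem_filter.mp ht).2)]
  set T : ℤ := ∑ t ∈ P, (a t - b t) with hT
  set T' : ℤ := ∑ t ∈ L, (b t - a t) with hT'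
  have hTT' : T ≤ T' := by linarith [hsplit, hsplit']
  have hT0 : 0 ≤ T := Finset.sum_nonneg fun t ht => by
    have := (mem_filter.mp ht).2; linarith
  have hTX : T ≤ (P.card : ℤ) * X := by
    calc T ≤ ∑ _t ∈ P, X := Finset.sum_le_sum fun t _ => by
              have := h3 t; have := h2 t; simp only [hX]; linarith
    _ = (P.card : ℤ) * X := by rw [Finset.sum_const, nsmul_eq_mul]
  have hTY : T ≤ (L.card : ℤ) * Y := by
    refine hTT'.trans ?_
    calc T' ≤ ∑ _t ∈ L, Y := Finset.sum_le_sum fun t _ => by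
              have := h4 t; have := h1 t; simp only [hY]; linarith
    _ = (L.card : ℤ) * Y := by rw [Finset.sum_const, nsmul_eq_mul]
  have hcards : (P.card : ℤ) + (L.card : ℤ) ≤ (Fintype.card ι : ℤ) := by
    have hdisj : Disjoint P L := by
      rw [Finset.disjoint_left]
      intro t htP htL
      exact absurd (mem_filter.mp htL).2 (not_lt.mpr (le_of_lt (mem_filter.mp htP).2))
    have h := Finset.card_union_of_disjoint hdisj
    have h2' : (P ∪ L).card ≤ Fintype.card ι := by
      simpa using Finset.card_le_univ (P ∪ L)
    exact_mod_cast h ▸ h2'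
  have hXY : X + Y = 2 * M := by simp only [hX, hY]; ring
  have h2T : 2 * T ≤ (Fintype.card ι : ℤ) * M := by
    by_cases hPe : P = ∅
    · simp only [hT, hPe, Finset.sum_empty]; linarith
    by_cases hLe : L = ∅
    · have : T' = 0 := by simp [hT', hLe]
      have : T = 0 := le_antisymm (this ▸ hTT') hT0
      rw [this]; linarith
    · obtain ⟨tP, htP⟩ := Finset.nonempty_iff_ne_empty.mpr hPe
      obtain ⟨tL, htL⟩ := Finset.nonempty_iff_ne_empty.mpr hLe
      have hXpos : 0 < X := by
        have h5 := (mem_filter.mp htP).2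
        have := h3 tP; have := h2 tP; simp only [hX]; linarith
      have hYpos : 0 < Y := by
        have h5 := (mem_filter.mp htL).2
        have := h4 tL; have := h1 tL; simp only [hY]; linarith
      have hkH : (1:ℤ) ≤ (P.card : ℤ) := by
        exact_mod_cast Finset.card_pos.mpr ⟨tP, htP⟩
      have hkL : (1:ℤ) ≤ (L.card : ℤ) := by
        exact_mod_cast Finset.card_pos.mpr ⟨tL, htL⟩
      set kH : ℤ := (P.card : ℤ)
      set kL : ℤ := (L.card : ℤ)
      have e3 : T * T ≤ (kH * X) * (kL * Y) :=
        mul_le_mul hTX hTY hT0 (by positivity)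
      have e1 : 4 * (kH * kL) ≤ (kH + kL)^2 := by nlinarith [sq_nonneg (kH - kL)]
      have e2 : 4 * (X * Y) ≤ (X + Y)^2 := by nlinarith [sq_nonneg (X - Y)]
      have e6 : (4 * (kH * kL)) * (4 * (X * Y)) ≤ ((kH + kL)^2) * ((X + Y)^2) :=
        mul_le_mul e1 e2 (by positivity) (by positivity)
      have e4 : (kH + kL)^2 ≤ (Fintype.card ι : ℤ)^2 := by
        have h0 : (0:ℤ) ≤ kH + kL := by linarith
        exact pow_le_pow_left₀ h0 hcards 2
      have e7 : ((kH + kL)^2) * ((X + Y)^2) ≤ ((Fintype.card ι : ℤ)^2) * ((X + Y)^2) :=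
        mul_le_mul_of_nonneg_right e4 (sq_nonneg _)
      have e8 : ((Fintype.card ι : ℤ)^2) * ((X + Y)^2) = 4 * ((Fintype.card ι : ℤ) * M)^2 := by
        rw [hXY]; ring
      have s1 : 16 * (T * T) ≤ (4 * (kH * kL)) * (4 * (X * Y)) := by
        calc 16 * (T * T) ≤ 16 * ((kH * X) * (kL * Y)) := by linarith [e3]
        _ = (4 * (kH * kL)) * (4 * (X * Y)) := by ring
      have efin : 4 * (T * T) ≤ ((Fintype.card ι : ℤ) * M)^2 := by
        have := s1.trans (e6.trans e7)
        rw [e8] at this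
        linarith
      exact two_mul_le_of_sq T _ hT0 hcM0 efin
  linarith [hsplit, h2T]

lemma slice_arith {ι : Type*} [Fintype ι] [DecidableEq ι] (a b : ι → ℤ) (F E M : ℤ)
    (h1 : ∀ t, F ≤ a t) (h2 : ∀ t, E ≤ b t) (h3 : ∀ t, a t ≤ F + M) (h4 : ∀ t, b t ≤ E + M) :
    2 * min (∑ t, a t) (∑ t, b t) ≤ (Fintype.card ι : ℤ) * M + 2 * ∑ t, min (a t) (b t) := by
  rcases le_total (∑ t, a t) (∑ t, b t) with hab | hab
  · rw [min_eq_left hab]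
    exact slice_core a b F E M h1 h2 h3 h4 hab
  · rw [min_eq_right hab]
    have := slice_core b a E F M h2 h1 h4 h3 hab
    simpa [min_comm] using this


theorem iso {n : ℕ} : ∀ {d : ℕ} (S : Finset (Fin d → Fin n)),
    2 * min S.card Sᶜ.card ≤ ∑ i, (badV i S).card := by
  intro d
  induction d with
  | zero =>
    intro S
    have h := Finset.card_add_card_compl S
    have h1 : Fintype.card (Fin 0 → Fin n) = 1 := by simp [Fintype.card_fun]
    rw [h1] at h
    have h0 : S.card = 0 ∨ Sᶜ.card = 0 := by omega
    rcases h0 with h0 | h0 <;> simp [h0]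
  | succ d ih =>
    intro S
    -- slice decompositions of cardinalities
    have hcardS : S.card = ∑ t, (Sl S t).card := by
      have hrw : S = univ.filter (· ∈ S) := by ext v; simp
      conv_lhs => rw [hrw]
      exact cnt2 (· ∈ S)
    have hcardSc : Sᶜ.card = ∑ t, (bSl S t).card := by
      have hrw : Sᶜ = univ.filter (· ∉ S) := by ext v; simp
      conv_lhs => rw [hrw]
      exact cnt2 (· ∉ S)
    have hb0 : (badV (0 : Fin (d+1)) S).card = n * (Mx S).card := by
      have hrw : badV (0 : Fin (d+1)) S = univ.filter
          (fun v => (∃ a, Fin.cons a (Fin.tail v) ∈ S) ∧ (∃ a, Fin.cons a (Fin.tail v) ∉ S)) := by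
        ext v; simp [badV, update_zero_eq]
      rw [hrw]
      exact cnt1 (fun g => (∃ a, Fin.cons a g ∈ S) ∧ (∃ a, Fin.cons a g ∉ S))
    have hbsucc : ∀ j : Fin d, (badV (Fin.succ j) S).card = ∑ t, (badV j (Sl S t)).card := by
      intro j
      have h1 := cnt2 (fun v => (∃ a, Function.update v (Fin.succ j) a ∈ S) ∧
        (∃ a, Function.update v (Fin.succ j) a ∉ S))
      rw [show badV (Fin.succ j) S = univ.filter (fun v => (∃ a, Function.update v (Fin.succ j) a ∈ S) ∧
        (∃ a, Function.update v (Fin.succ j) a ∉ S)) from rfl, h1]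
      refine Finset.sum_congr rfl fun t _ => ?_
      congr 1
      ext g
      simp only [mem_filter, mem_univ, true_and, badV, update_succ_eq, Fin.cons_zero,
        Fin.tail_cons, mem_Sl]
    -- subset relations
    have hF : ∀ t, (Fl S).card ≤ (Sl S t).card := fun t =>
      card_le_card fun g hg => mem_Sl.mpr ((mem_Fl.mp hg) t)
    have hE : ∀ t, (Em S).card ≤ (bSl S t).card := fun t =>
      card_le_card fun g hg => mem_bSl.mpr ((mem_Em.mp hg) t)
    have hFM : ∀ t, (Sl S t).card ≤ (Fl S).card + (Mx S).card := by
      intro t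
      refine (card_le_card (fun g hg => ?_)).trans (card_union_le _ _)
      by_cases h : ∀ s, Fin.cons s g ∈ S
      · exact mem_union_left _ (mem_Fl.mpr h)
      · push_neg at h
        exact mem_union_right _ (mem_Mx.mpr ⟨⟨t, mem_Sl.mp hg⟩, h⟩)
    have hEM : ∀ t, (bSl S t).card ≤ (Em S).card + (Mx S).card := by
      intro t
      refine (card_le_card (fun g hg => ?_)).trans (card_union_le _ _)
      by_cases h : ∀ s, Fin.cons s g ∉ S
      · exact mem_union_left _ (mem_Em.mpr h)
      · push_neg at h
        rcases h with ⟨s, hs⟩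
        exact mem_union_right _ (mem_Mx.mpr ⟨⟨s, hs⟩, ⟨t, mem_bSl.mp hg⟩⟩)
    have hcompl : ∀ t, (Sl S t)ᶜ = bSl S t := fun t => by ext g; simp
    -- integer versions
    have harith := slice_arith (ι := Fin n) (fun t => ((Sl S t).card : ℤ))
      (fun t => ((bSl S t).card : ℤ)) ((Fl S).card : ℤ) ((Em S).card : ℤ) ((Mx S).card : ℤ)
      (fun t => by show ((Fl S).card : ℤ) ≤ ((Sl S t).card : ℤ); exact_mod_cast hF t)
      (fun t => by show ((Em S).card : ℤ) ≤ ((bSl S t).card : ℤ); exact_mod_cast hE t)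
      (fun t => by show ((Sl S t).card : ℤ) ≤ ((Fl S).card : ℤ) + ((Mx S).card : ℤ); exact_mod_cast hFM t)
      (fun t => by show ((bSl S t).card : ℤ) ≤ ((Em S).card : ℤ) + ((Mx S).card : ℤ); exact_mod_cast hEM t)
    rw [Fintype.card_fin] at harith
    have hIH : ∀ t : Fin n, 2 * min ((Sl S t).card : ℤ) ((bSl S t).card : ℤ)
        ≤ ∑ j : Fin d, ((badV j (Sl S t)).card : ℤ) := by
      intro t
      have := ih (Sl S t)
      rw [hcompl t] at this
      exact_mod_cast this
    have goalZ : (2 : ℤ) * min (S.card : ℤ) (Sᶜ.card : ℤ)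
        ≤ ∑ i : Fin (d+1), ((badV i S).card : ℤ) := by
      rw [Fin.sum_univ_succ]
      have e0 : ((badV (0 : Fin (d+1)) S).card : ℤ) = (n : ℤ) * (Mx S).card := by
        exact_mod_cast hb0
      have e1 : ∑ j : Fin d, ((badV (Fin.succ j) S).card : ℤ)
          = ∑ t : Fin n, ∑ j : Fin d, ((badV j (Sl S t)).card : ℤ) := by
        rw [← Finset.sum_comm]
        refine Finset.sum_congr rfl fun j _ => ?_
        exact_mod_cast hbsucc j
      have e2 : (S.card : ℤ) = ∑ t : Fin n, ((Sl S t).card : ℤ) := by exact_mod_cast hcardS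
      have e3 : (Sᶜ.card : ℤ) = ∑ t : Fin n, ((bSl S t).card : ℤ) := by exact_mod_cast hcardSc
      rw [e0, e1, e2, e3]
      calc 2 * min (∑ t : Fin n, ((Sl S t).card : ℤ)) (∑ t : Fin n, ((bSl S t).card : ℤ))
          ≤ (n : ℤ) * (Mx S).card + 2 * ∑ t : Fin n, min ((Sl S t).card : ℤ) ((bSl S t).card : ℤ) :=
            harith
        _ ≤ (n : ℤ) * (Mx S).card + ∑ t : Fin n, ∑ j : Fin d, ((badV j (Sl S t)).card : ℤ) := by
            rw [Finset.mul_sum]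
            exact add_le_add le_rfl (Finset.sum_le_sum fun t _ => hIH t)
    exact_mod_cast goalZ

lemma walk_closed {V : Type*} {G : SimpleGraph V} {S : Finset V}
    (h2 : ∀ u ∈ S, ∀ w, G.Adj u w → w ∈ S) :
    ∀ {u w : V}, G.Walk u w → u ∈ S → w ∈ S := by
  intro u w p
  induction p with
  | nil => exact id
  | cons h p ih => exact fun hu => ih (h2 _ hu _ h)

lemma grid_adj_update {d n : ℕ} (v : Fin d → Fin n) (i : Fin d) (x y : Fin n)
    (h : (x : ℕ) + 1 = y ∨ (y : ℕ) + 1 = x) :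
    (gridGraph d n).Adj (Function.update v i x) (Function.update v i y) := by
  refine ⟨i, fun j hj => ?_, ?_⟩
  · rw [Function.update_of_ne hj, Function.update_of_ne hj]
  · simpa using h

lemma line_cross {d n : ℕ} {C S : Finset (Fin d → Fin n)}
    (hS2 : ∀ u ∈ S, ∀ w, (avoidGraph (gridGraph d n) ↑C).Adj u w → w ∈ S)
    (i : Fin d) (v : Fin d → Fin n) (a b : Fin n)
    (ha : Function.update v i a ∈ S) (hb : Function.update v i b ∉ S) :
    ∃ x : Fin n, Function.update v i x ∈ C := by
  by_contra hno
  push_neg at hno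
  have step : ∀ x y : Fin n, ((x : ℕ) + 1 = y ∨ (y : ℕ) + 1 = x) →
      Function.update v i x ∈ S → Function.update v i y ∈ S := by
    intro x y hxy hx
    refine hS2 _ hx _ (show (gridGraph d n).Adj (Function.update v i x) (Function.update v i y) ∧ Function.update v i x ∉ (↑C : Set (Fin d → Fin n)) ∧ Function.update v i y ∉ (↑C : Set (Fin d → Fin n)) from ⟨grid_adj_update v i x y hxy, ?_, ?_⟩)
    · simpa using hno x
    · simpa using hno y
  have up : ∀ m : ℕ, ∀ x y : Fin n, (y : ℕ) = (x : ℕ) + m →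
      Function.update v i x ∈ S → Function.update v i y ∈ S := by
    intro m
    induction m with
    | zero =>
      intro x y h hx
      rwa [show y = x from Fin.ext (by omega)]
    | succ k ihk =>
      intro x y h hx
      have hz : (x : ℕ) + k < n := by have := y.isLt; omega
      refine step ⟨(x : ℕ) + k, hz⟩ y (Or.inl (by simp; omega)) (ihk x ⟨(x : ℕ) + k, hz⟩ (by simp) hx)
  have down : ∀ m : ℕ, ∀ x y : Fin n, (x : ℕ) = (y : ℕ) + m →
      Function.update v i x ∈ S → Function.update v i y ∈ S := by
    intro m
    induction m with
    | zero =>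
      intro x y h hx
      rwa [show y = x from Fin.ext (by omega)]
    | succ k ihk =>
      intro x y h hx
      have hz : (y : ℕ) + 1 < n := by have := x.isLt; omega
      have hzS := ihk x ⟨(y : ℕ) + 1, hz⟩ (by simp; omega) hx
      exact step ⟨(y : ℕ) + 1, hz⟩ y (Or.inr (by simp)) hzS
  rcases le_total (a : ℕ) (b : ℕ) with h | h
  · exact hb (up ((b : ℕ) - (a : ℕ)) a b (by omega) ha)
  · exact hb (down ((a : ℕ) - (b : ℕ)) a b (by omega) ha)

lemma bad_card_le {d n : ℕ} (C S : Finset (Fin d → Fin n))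
    (hS2 : ∀ u ∈ S, ∀ w, (avoidGraph (gridGraph d n) ↑C).Adj u w → w ∈ S) (i : Fin d) :
    (badV i S).card ≤ C.card * n := by
  classical
  have hsub : badV i S ⊆ C.biUnion (fun c => univ.image (fun a => Function.update c i a)) := by
    intro v hv
    simp only [badV, mem_filter, mem_univ, true_and] at hv
    obtain ⟨⟨a, ha⟩, ⟨b, hb⟩⟩ := hv
    obtain ⟨x, hx⟩ := line_cross hS2 i v a b ha hb
    refine Finset.mem_biUnion.mpr ⟨_, hx, Finset.mem_image.mpr ⟨v i, mem_univ _, ?_⟩⟩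
    rw [Function.update_idem, Function.update_eq_self]
  calc (badV i S).card ≤ (C.biUnion (fun c => univ.image (fun a => Function.update c i a))).card :=
        card_le_card hsub
    _ ≤ ∑ c ∈ C, (univ.image (fun a => Function.update c i a)).card := card_biUnion_le
    _ ≤ ∑ _c ∈ C, n := Finset.sum_le_sum fun c _ => (card_image_le).trans (by simp)
    _ = C.card * n := by rw [Finset.sum_const, smul_eq_mul]

end GridSepAux

open Finset GridSepAux in
/-- Theorem 4 (separator theorem for grids): for `1/2 ≤ α < 1`, any
`α`-separator of `G_d(n)` has cardinality at least `(1−α)·n^{d−1}/d`. -/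
theorem grid_separator_lower_bound
    (d n : ℕ) (hd : 1 ≤ d) (hn : 1 ≤ n)
    (α : ℝ) (hα1 : 1 / 2 ≤ α) (hα2 : α < 1)
    (C : Finset ((_ : Fin d) → Fin n))
    (hsep : ∀ v ∉ C,
      ({w | (avoidGraph (gridGraph d n) ↑C).Reachable v w} : Set _).ncard
        ≤ α * (n : ℝ) ^ d) :
    (1 - α) * (n : ℝ) ^ (d - 1) / d ≤ (C.card : ℝ) := by
  classical
  set R := avoidGraph (gridGraph d n) (↑C) with hR
  have hd0 : (0:ℝ) < (d:ℝ) := by exact_mod_cast hd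
  have hd1 : (1:ℝ) ≤ (d:ℝ) := by exact_mod_cast hd
  have hn0 : (0:ℝ) < (n:ℝ) := by exact_mod_cast hn
  have hn1 : (1:ℝ) ≤ (n:ℝ) := by exact_mod_cast hn
  have hNd0 : (0:ℝ) < (n:ℝ)^d := by positivity
  have hw0 : (0:ℝ) ≤ (n:ℝ)^(d-1) := by positivity
  have hC0 : (0:ℝ) ≤ (C.card : ℝ) := by positivity
  set lo : ℝ := (1 - α) * (n:ℝ)^d / 2 with hlo
  have hlopos : 0 < lo := by
    rw [hlo]
    have h1 : 0 < 1 - α := by linarith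
    positivity
  have hcardV : ((Fintype.card ((_ : Fin d) → Fin n)) : ℝ) = (n:ℝ)^d := by
    rw [Fintype.card_fun]
    push_cast [Fintype.card_fin]
    ring
  set cand := univ.powerset.filter (fun S : Finset ((_ : Fin d) → Fin n) =>
    ((S.card : ℝ) < lo) ∧ (∀ u ∈ S, ∀ w, R.Adj u w → w ∈ S)) with hcand
  have hempty : (∅ : Finset ((_ : Fin d) → Fin n)) ∈ cand := by
    simp only [hcand, mem_filter, mem_powerset]
    refine ⟨empty_subset _, by simpa using hlopos, by simp⟩
  obtain ⟨S, hScand, hSmax⟩ := Finset.exists_max_image cand Finset.card ⟨∅, hempty⟩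
  simp only [hcand, mem_filter, mem_powerset] at hScand
  obtain ⟨-, hSlt, hS2⟩ := hScand
  by_cases hall : ∀ v, v ∉ C → v ∈ S
  · -- everything outside C is in S, so C is huge
    have hsub : (univ : Finset ((_ : Fin d) → Fin n)) ⊆ S ∪ C := by
      intro v _
      by_cases h : v ∈ C
      · exact mem_union_right _ h
      · exact mem_union_left _ (hall v h)
    have hcards : (n:ℝ)^d ≤ (S.card : ℝ) + (C.card : ℝ) := by
      have h1 : Fintype.card ((_ : Fin d) → Fin n) ≤ S.card + C.card := by
        calc Fintype.card ((_ : Fin d) → Fin n) = (univ : Finset ((_ : Fin d) → Fin n)).card :=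
              Finset.card_univ.symm
        _ ≤ (S ∪ C).card := card_le_card hsub
        _ ≤ S.card + C.card := card_union_le _ _
      calc (n:ℝ)^d = ((Fintype.card ((_ : Fin d) → Fin n)) : ℝ) := hcardV.symm
      _ ≤ (S.card : ℝ) + (C.card : ℝ) := by exact_mod_cast h1
    rw [div_le_iff₀ hd0]
    have hpow : (n:ℝ)^(d-1) ≤ (n:ℝ)^d := pow_le_pow_right₀ hn1 (Nat.sub_le d 1)
    have k1 : (1 - α) * (n:ℝ)^(d-1) ≤ (1 - α) * (n:ℝ)^d :=
      mul_le_mul_of_nonneg_left hpow (by linarith)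
    have k2 : (1 - α) * (n:ℝ)^d ≤ (1/2) * (n:ℝ)^d := by nlinarith [hNd0.le]
    have k3 : (1/2) * (n:ℝ)^d ≤ (C.card : ℝ) := by
      rw [hlo] at hSlt
      nlinarith [hNd0.le]
    have k4 : (C.card : ℝ) ≤ (C.card : ℝ) * (d:ℝ) := by nlinarith [hC0, hd1]
    linarith
  · push_neg at hall
    obtain ⟨v, hvC, hvS⟩ := hall
    set K := univ.filter (fun w => R.Reachable v w) with hK
    have hvK : v ∈ K := mem_filter.mpr ⟨mem_univ _, SimpleGraph.Reachable.refl v⟩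
    have hKcard : (K.card : ℝ) ≤ α * (n:ℝ)^d := by
      have h := hsep v hvC
      have heq : {w | R.Reachable v w} = (↑K : Set ((_ : Fin d) → Fin n)) := by
        ext w; simp [hK]
      rw [hR] at h
      rw [← hR] at h
      rw [heq, Set.ncard_coe_finset] at h
      exact h
    have hK2 : ∀ u ∈ K, ∀ w, R.Adj u w → w ∈ K := by
      intro u hu w hA
      simp only [hK, mem_filter, mem_univ, true_and] at hu ⊢
      exact hu.trans hA.reachable
    have hdisj : Disjoint S K := by
      rw [Finset.disjoint_left]
      intro u huS huK
      have hr : R.Reachable v u := by simpa [hK] using huK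
      obtain ⟨p⟩ := hr.symm
      exact hvS (walk_closed hS2 p huS)
    set S' := S ∪ K with hS'
    have hS'2 : ∀ u ∈ S', ∀ w, R.Adj u w → w ∈ S' := by
      intro u hu w hA
      rcases mem_union.mp hu with h | h
      · exact mem_union_left _ (hS2 u h w hA)
      · exact mem_union_right _ (hK2 u h w hA)
    have hS'card : S'.card = S.card + K.card := card_union_of_disjoint hdisj
    have hge : lo ≤ (S'.card : ℝ) := by
      by_contra hlt2
      push_neg at hlt2
      have hmem : S' ∈ cand := by
        simp only [hcand, mem_filter, mem_powerset]
        exact ⟨subset_univ _, hlt2, hS'2⟩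
      have hmax := hSmax S' hmem
      have hlt3 : S.card < S'.card := by
        apply Finset.card_lt_card
        rw [Finset.ssubset_iff_of_subset (subset_union_left)]
        exact ⟨v, mem_union_right _ hvK, hvS⟩
      omega
    have hlt4 : (S'.card : ℝ) < lo + α * (n:ℝ)^d := by
      rw [hS'card]
      push_cast
      linarith [hSlt, hKcard]
    have hiso := iso (S := S')
    have hcov : ∀ i : Fin d, (badV i S').card ≤ C.card * n := fun i => bad_card_le C S' hS'2 i
    have hsum : ∑ i : Fin d, (badV i S').card ≤ d * (C.card * n) := by
      calc ∑ i : Fin d, (badV i S').card ≤ ∑ _i : Fin d, C.card * n :=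
            Finset.sum_le_sum fun i _ => hcov i
      _ = d * (C.card * n) := by rw [Finset.sum_const, smul_eq_mul, card_univ, Fintype.card_fin]
    have hmain : 2 * min S'.card S'ᶜ.card ≤ d * (C.card * n) := le_trans hiso hsum
    have hm2 : lo ≤ (S'ᶜ.card : ℝ) := by
      have h1 : S'ᶜ.card = Fintype.card ((_ : Fin d) → Fin n) - S'.card := Finset.card_compl S'
      have h2 : S'.card ≤ Fintype.card ((_ : Fin d) → Fin n) := Finset.card_le_univ S'
      have h3 : (S'ᶜ.card : ℝ) = (n:ℝ)^d - (S'.card : ℝ) := by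
        rw [h1, Nat.cast_sub h2, hcardV]
      rw [h3, hlo] at *
      nlinarith [hlt4]
    have hminR : 2 * lo ≤ ((d : ℝ)) * ((C.card : ℝ) * (n:ℝ)) := by
      have hcast : ((2 * min S'.card S'ᶜ.card : ℕ) : ℝ) ≤ ((d * (C.card * n) : ℕ) : ℝ) :=
        Nat.cast_le.mpr hmain
      push_cast [Nat.cast_min] at hcast
      have hminlo : lo ≤ min ((S'.card : ℝ)) ((S'ᶜ.card : ℝ)) := le_min hge hm2
      linarith
    have hpow : (n:ℝ)^d = (n:ℝ)^(d-1) * (n:ℝ) := by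
      conv_lhs => rw [show d = (d-1)+1 by omega]
      rw [pow_succ]
    rw [div_le_iff₀ hd0]
    have hx : (1 - α) * ((n:ℝ)^(d-1) * (n:ℝ)) ≤ (d:ℝ) * ((C.card : ℝ) * (n:ℝ)) := by
      rw [← hpow]
      rw [hlo] at hminR
      linarith
    have hx' : ((1 - α) * (n:ℝ)^(d-1)) * (n:ℝ) ≤ ((d:ℝ) * (C.card : ℝ)) * (n:ℝ) := by
      linear_combination hx
    have hfin : (1 - α) * (n:ℝ)^(d-1) ≤ (d:ℝ) * (C.card : ℝ) := le_of_mul_le_mul_right hx' hn0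
    linarith
end
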